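/- Let k be an algebraically closed field, H a finite group, and N a normal subgroup of H such that the quotient H/N is cyclic of order e, where e is invertible in k. Let V be a finite-dimensional k-vector space carrying a simple k[N]-module structure, and let g ∈ H be an element whose image generates H/N; assume the g-conjugate k[N]-module structure on V (in which n ∈ N acts as gng⁻¹ acts in the original structure) is isomorphic to the original one. Then there exist e k[H]-module structures on V, pairwise non-isomorphic as k[H]-modules, each of whose restrictions to k[N] is the given k[N]-module structure. -/

import Mathlib

private lemma schur_scalar {k : Type*} [Field k] [IsAlgClosed k] {G : Type*} [Monoid G]
    {V : Type*} [AddCommGroup V] [Module k V] [FiniteDimensional k V]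
    (ρ : Representation k G V) (hsimple : IsSimpleModule (MonoidAlgebra k G) ρ.asModule)
    (f : V →ₗ[k] V) (hf : ∀ n : G, f ∘ₗ ρ n = ρ n ∘ₗ f) :
    ∃ c : k, ∀ v : V, f v = c • v := by
  have hnt : Nontrivial ρ.asModule := IsSimpleModule.nontrivial (MonoidAlgebra k G) _
  have hV : Nontrivial V := ρ.asModuleEquiv.toEquiv.symm.nontrivial
  obtain ⟨c, hc⟩ := Module.End.exists_eigenvalue (K := k) (V := V) f
  have hcomm : ∀ x : MonoidAlgebra k G, ∀ v : V,
      f (ρ.asAlgebraHom x v) = ρ.asAlgebraHom x (f v) := by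
    intro x
    refine MonoidAlgebra.induction_on
      (motive := fun x => ∀ v : V, f (ρ.asAlgebraHom x v) = ρ.asAlgebraHom x (f v)) x
      (fun g v => ?_) (fun a b ha hb v => ?_) (fun r a ha v => ?_)
    · rw [ρ.asAlgebraHom_of]
      exact LinearMap.congr_fun (hf g) v
    · simp [map_add, ha, hb]
    · simp [map_smul, ha]
  set p : Submodule (MonoidAlgebra k G) ρ.asModule :=
    { carrier := {v : ρ.asModule | f (ρ.asModuleEquiv v) = c • (ρ.asModuleEquiv v)}
      add_mem' := by
        intro a b ha hb
        simp only [Set.mem_setOf_eq, map_add] at *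
        rw [ha, hb, smul_add]
      zero_mem' := by simp
      smul_mem' := by
        intro r v hv
        simp only [Set.mem_setOf_eq] at *
        rw [ρ.asModuleEquiv_map_smul, hcomm, hv, map_smul] } with hp
  obtain ⟨v0, hv0⟩ := hc.exists_hasEigenvector
  have hmem : ∀ v : V, (ρ.asModuleEquiv.symm v ∈ p) ↔ f v = c • v := by
    intro v
    constructor <;> intro h
    · have := h
      simp only [hp, Submodule.mem_mk, AddSubmonoid.mem_mk, AddSubsemigroup.mem_mk,
        Set.mem_setOf_eq, AddEquiv.apply_symm_apply] at this
      exact this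
    · simp only [hp, Submodule.mem_mk, AddSubmonoid.mem_mk, AddSubsemigroup.mem_mk,
        Set.mem_setOf_eq, AddEquiv.apply_symm_apply]
      exact h
  have hpne : p ≠ ⊥ := by
    intro hbot
    have h1 : ρ.asModuleEquiv.symm v0 ∈ p := (hmem v0).2 (Module.End.mem_eigenspace_iff.1 hv0.1)
    rw [hbot, Submodule.mem_bot] at h1
    exact hv0.2 (by simpa using congrArg ρ.asModuleEquiv h1)
  have hptop : p = ⊤ := (hsimple.1.2 p).resolve_left hpne
  refine ⟨c, fun v => ?_⟩
  exact (hmem v).1 (hptop ▸ Submodule.mem_top)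

private lemma myConjZpow {G M : Type*} [Group G] [Group M] {N : Subgroup G} [hNor : N.Normal]
    (r : N →* M) (g : G) (Φ : M)
    (base : ∀ (n n' : N), (n' : G) = g * n * g⁻¹ → Φ * r n = r n' * Φ) :
    ∀ (m : ℤ) (n n' : N), (n' : G) = g ^ m * n * g ^ (-m) → Φ ^ m * r n = r n' * Φ ^ m := by
  intro m
  induction m using Int.induction_on with
  | zero =>
    intro n n' h
    simp only [zpow_zero, one_mul, mul_one, neg_zero] at h ⊢
    obtain rfl : n' = n := Subtype.ext h
    rfl
  | succ m ih =>
    intro n n' h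
    set n1 : N := ⟨g * n * g⁻¹, hNor.conj_mem _ n.2 g⟩ with hn1
    have e1 : Φ * r n = r n1 * Φ := base n n1 rfl
    have e2 : Φ ^ (m : ℤ) * r n1 = r n' * Φ ^ (m : ℤ) := by
      refine ih n1 n' ?_
      rw [h, hn1]
      push_cast
      group
    calc Φ ^ ((m : ℤ) + 1) * r n = Φ ^ (m : ℤ) * (Φ * r n) := by
          rw [zpow_add_one, mul_assoc]
      _ = Φ ^ (m : ℤ) * r n1 * Φ := by rw [e1, mul_assoc]
      _ = r n' * Φ ^ (m : ℤ) * Φ := by rw [e2]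
      _ = r n' * Φ ^ ((m : ℤ) + 1) := by rw [mul_assoc, ← zpow_add_one]
  | pred m ih =>
    intro n n' h
    set n1 : N := ⟨g⁻¹ * n * g, by simpa using hNor.conj_mem _ n.2 g⁻¹⟩ with hn1
    have e1 : Φ * r n1 = r n * Φ := by
      refine base n1 n ?_
      rw [hn1]
      push_cast
      group
    have e1' : Φ⁻¹ * r n = r n1 * Φ⁻¹ := by
      calc Φ⁻¹ * r n = Φ⁻¹ * (r n * Φ) * Φ⁻¹ := by group
        _ = Φ⁻¹ * (Φ * r n1) * Φ⁻¹ := by rw [e1]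
        _ = r n1 * Φ⁻¹ := by group
    have e2 : Φ ^ (-(m : ℤ)) * r n1 = r n' * Φ ^ (-(m : ℤ)) := by
      refine ih n1 n' ?_
      rw [h, hn1]
      push_cast
      group
    calc Φ ^ (-(m : ℤ) - 1) * r n = Φ ^ (-(m : ℤ)) * (Φ⁻¹ * r n) := by
          rw [zpow_sub_one, mul_assoc]
      _ = Φ ^ (-(m : ℤ)) * r n1 * Φ⁻¹ := by rw [e1', mul_assoc]
      _ = r n' * Φ ^ (-(m : ℤ)) * Φ⁻¹ := by rw [e2]
      _ = r n' * Φ ^ (-(m : ℤ) - 1) := by rw [mul_assoc, ← zpow_sub_one]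

/-- Let `k` be an algebraically closed field, `H` a finite group, `N` a normal subgroup with
`H/N` cyclic of order `e`, where `e` is invertible in `k`. Let `V` be a finite-dimensional
`k`-vector space with a simple `k[N]`-module structure (a representation `ρ` of `N` on `V`),
and `g ∈ H` an element whose image generates `H/N`, such that the `g`-conjugate module
structure (where `n` acts as `gng⁻¹` does in `ρ`) is isomorphic to `ρ`. Then there exist `e`
`k[H]`-module structures on `V`, pairwise non-isomorphic as `k[H]`-modules, each restricting
to the given `k[N]`-module structure. -/
theorem stmt10 (k : Type*) [Field k] [IsAlgClosed k]
    (H : Type*) [Group H] [Fintype H] (N : Subgroup H) [hN : N.Normal]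
    (e : ℕ) (hcyc : IsCyclic (H ⧸ N)) (hcard : Nat.card (H ⧸ N) = e)
    (he : (e : k) ≠ 0)
    (V : Type*) [AddCommGroup V] [Module k V] [FiniteDimensional k V]
    (ρ : Representation k N V)
    (hsimple : IsSimpleModule (MonoidAlgebra k N) ρ.asModule)
    (g : H) (hg : Subgroup.zpowers (QuotientGroup.mk g : H ⧸ N) = ⊤)
    (hconj : ∃ φ : V ≃ₗ[k] V, ∀ n : N,
      (φ : V →ₗ[k] V) ∘ₗ (ρ n)
        = (ρ ⟨g * (n : H) * g⁻¹, hN.conj_mem (n : H) n.2 g⟩) ∘ₗ (φ : V →ₗ[k] V)) :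
    ∃ π : Fin e → Representation k H V,
      (∀ i : Fin e, ∀ n : N, π i (n : H) = ρ n) ∧
      (∀ i j : Fin e, i ≠ j →
        ¬ ∃ ψ : V ≃ₗ[k] V, ∀ h : H,
          (ψ : V →ₗ[k] V) ∘ₗ (π i h) = (π j h) ∘ₗ (ψ : V →ₗ[k] V)) := by

  classical
  obtain ⟨φ, hφ⟩ := hconj
  have hV : Nontrivial V := by
    have := IsSimpleModule.nontrivial (MonoidAlgebra k N) ρ.asModule
    exact ρ.asModuleEquiv.toEquiv.symm.nontrivial
  have epos : 0 < e := by rw [← hcard]; exact Nat.card_pos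
  have horder : orderOf (QuotientGroup.mk g : H ⧸ N) = e := by
    rw [← Nat.card_zpowers, hg, ← hcard]
    exact Subgroup.card_top
  have hge : g ^ e ∈ N := by
    rw [← QuotientGroup.eq_one_iff]
    show (QuotientGroup.mk g : H ⧸ N) ^ e = 1
    rw [← horder]
    exact pow_orderOf_eq_one _
  set gE : N := ⟨g ^ e, hge⟩ with hgE
  set ρu : N →* (Module.End k V)ˣ := MonoidHom.toHomUnits ρ with hρu
  have ρu_coe : ∀ n : N, ((ρu n : Module.End k V)) = ρ n := fun n => rfl
  set φu : (Module.End k V)ˣ :=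
    ⟨φ.toLinearMap, φ.symm.toLinearMap,
      by ext v; simp [Module.End.mul_apply], by ext v; simp [Module.End.mul_apply]⟩ with hφu
  have hbase : ∀ n n' : N, (n' : H) = g * n * g⁻¹ → φu * ρu n = ρu n' * φu := by
    intro n n' hh
    apply Units.ext
    have hn' : n' = ⟨g * (n : H) * g⁻¹, hN.conj_mem (n : H) n.2 g⟩ := Subtype.ext hh
    show φ.toLinearMap * ρ n = ρ n' * φ.toLinearMap
    rw [hn', Module.End.mul_eq_comp, Module.End.mul_eq_comp]
    exact hφ n
  set T : (Module.End k V)ˣ := (ρu gE)⁻¹ * φu ^ e with hT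
  have hφpow := myConjZpow ρu g φu hbase
  have hTcommU : ∀ n : N, T * ρu n = ρu n * T := by
    intro n
    have h1 : φu ^ (e : ℤ) * ρu n = ρu (gE * n * gE⁻¹) * φu ^ (e : ℤ) := by
      refine hφpow e n _ ?_
      push_cast [hgE]
      rw [zpow_natCast, zpow_neg, zpow_natCast]
    have h2 : ρu (gE * n * gE⁻¹) = ρu gE * ρu n * (ρu gE)⁻¹ := by
      rw [map_mul, map_mul, map_inv]
    rw [hT, ← zpow_natCast φu e, mul_assoc, h1, h2]
    group
  have hTcomm : ∀ n : N, (T : Module.End k V) ∘ₗ ρ n = ρ n ∘ₗ (T : Module.End k V) := by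
    intro n
    rw [← Module.End.mul_eq_comp, ← Module.End.mul_eq_comp, ← ρu_coe, ← Units.val_mul,
      hTcommU n, Units.val_mul]
  obtain ⟨c, hcT⟩ := schur_scalar ρ hsimple (T : Module.End k V) hTcomm
  have hc0 : c ≠ 0 := by
    intro h0
    obtain ⟨v, hv⟩ := exists_ne (0 : V)
    apply hv
    have h1 : (T : Module.End k V) v = 0 := by rw [hcT, h0, zero_smul]
    have h3 : (↑T⁻¹ : Module.End k V) ((T : Module.End k V) v) = v := by
      rw [← Module.End.mul_apply, ← Units.val_mul, inv_mul_cancel, Units.val_one,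
        Module.End.one_apply]
    rw [← h3, h1, map_zero]
  set cu : kˣ := Units.mk0 c hc0 with hcu
  set scal : kˣ →* (Module.End k V)ˣ :=
    Units.map (algebraMap k (Module.End k V)).toMonoidHom with hscal
  have hscal_coe : ∀ z : kˣ, ((scal z : (Module.End k V)ˣ) : Module.End k V)
      = algebraMap k (Module.End k V) (z : k) := fun z => rfl
  have hcentral : ∀ (z : kˣ) (x : (Module.End k V)ˣ), scal z * x = x * scal z := by
    intro z x
    apply Units.ext
    rw [Units.val_mul, Units.val_mul, hscal_coe]
    exact Algebra.commutes _ _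
  have hT_eq : T = scal cu := by
    apply Units.ext
    apply LinearMap.ext
    intro v
    rw [hcT v, hscal_coe]
    simp [hcu, Module.algebraMap_end_apply]
  obtain ⟨d, hd⟩ := IsAlgClosed.exists_pow_nat_eq c epos
  have hd0 : d ≠ 0 := fun h0 => hc0 (by rw [← hd, h0, zero_pow epos.ne'])
  set du : kˣ := Units.mk0 d hd0 with hdu
  have hdue : du ^ e = cu := by
    apply Units.ext
    push_cast [hdu, hcu]
    exact hd
  set Φ : (Module.End k V)ˣ := (scal du)⁻¹ * φu with hΦdef
  have hbaseΦ : ∀ n n' : N, (n' : H) = g * n * g⁻¹ → Φ * ρu n = ρu n' * Φ := by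
    intro n n' hh
    rw [hΦdef, mul_assoc, hbase n n' hh, ← map_inv, ← mul_assoc, hcentral du⁻¹ (ρu n'),
      mul_assoc]
  have hΦpow := myConjZpow ρu g Φ hbaseΦ
  have hΦe : Φ ^ e = ρu gE := by
    have hcomm : Commute ((scal du)⁻¹) φu := by
      show (scal du)⁻¹ * φu = φu * (scal du)⁻¹
      rw [← map_inv]
      exact hcentral du⁻¹ φu
    have hφe : φu ^ e = ρu gE * scal cu := by
      rw [← hT_eq, hT, mul_inv_cancel_left]
    rw [hΦdef, hcomm.mul_pow, inv_pow, ← map_pow, hdue, hφe, ← hcentral cu (ρu gE),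
      inv_mul_cancel_left]
  -- choice of exponents
  have hmkmem : ∀ h : H, ∃ m : ℤ, (QuotientGroup.mk g : H ⧸ N) ^ m = QuotientGroup.mk h :=
    fun h => Subgroup.mem_zpowers_iff.mp (by rw [hg]; exact Subgroup.mem_top _)
  choose mh hmh using hmkmem
  have hmemN : ∀ h : H, (g ^ mh h)⁻¹ * h ∈ N := fun h => QuotientGroup.eq.mp (hmh h)
  set nh : H → N := fun h => ⟨(g ^ mh h)⁻¹ * h, hmemN h⟩ with hnh
  have hdecomp : ∀ h : H, g ^ mh h * ((nh h : N) : H) = h := by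
    intro h
    rw [hnh]
    simp
  set conjN : ℤ → N → N := fun m n =>
    ⟨g ^ (-m) * (n : H) * g ^ m, by simpa [zpow_neg] using hN.conj_mem _ n.2 (g ^ (-m))⟩
    with hconjN
  have hΦconj : ∀ (m : ℤ) (n : N), ρu n * Φ ^ m = Φ ^ m * ρu (conjN m n) := by
    intro m n
    refine (hΦpow m (conjN m n) n ?_).symm
    simp only [hconjN]
    group
  set F : kˣ → ℤ → N → (Module.End k V)ˣ :=
    fun z m n => scal (z ^ m) * Φ ^ m * ρu n with hF
  have hdvd : ∀ m m' : ℤ, (QuotientGroup.mk g : H ⧸ N) ^ m = (QuotientGroup.mk g) ^ m' →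
      (e : ℤ) ∣ m' - m := by
    intro m m' hmm
    rw [← horder]
    exact orderOf_dvd_iff_zpow_eq_one.mpr (by rw [zpow_sub, hmm]; simp)
  have hwd : ∀ (z : kˣ), z ^ e = 1 → ∀ (m m' : ℤ) (n n' : N),
      g ^ m * (n : H) = g ^ m' * (n' : H) → F z m n = F z m' n' := by
    intro z hz m m' n n' heq
    have hmk : (QuotientGroup.mk g : H ⧸ N) ^ m = (QuotientGroup.mk g) ^ m' := by
      have h1 : (QuotientGroup.mk (g ^ m * (n : H)) : H ⧸ N)
          = QuotientGroup.mk (g ^ m' * (n' : H)) := congrArg _ heq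
      have h2 : ∀ (mm : ℤ) (nn : N), (QuotientGroup.mk (g ^ mm * (nn : H)) : H ⧸ N)
          = (QuotientGroup.mk g) ^ mm := by
        intro mm nn
        rw [QuotientGroup.mk_mul_of_mem (g ^ mm) nn.2]
        rfl
      rw [h2 m n, h2 m' n'] at h1
      exact h1
    obtain ⟨t, ht⟩ := hdvd m m' hmk
    have hm' : m' = m + e * t := by omega
    have key : (n' : H) = g ^ (m - m') * (n : H) := by
      have h2 : (g ^ m')⁻¹ * (g ^ m * (n : H)) = (g ^ m')⁻¹ * (g ^ m' * (n' : H)) := by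
        rw [heq]
      simp only [inv_mul_cancel_left] at h2
      rw [← h2]
      group
    have hn' : n' = gE ^ (-t) * n := by
      apply Subtype.ext
      show (n' : H) = ((gE ^ (-t) : N) : H) * (n : H)
      have hgEc : ((gE ^ (-t) : N) : H) = (g ^ e) ^ (-t) := by
        push_cast [hgE]
        rfl
      rw [key, hm', hgEc]
      rw [← zpow_natCast g e, ← zpow_mul]
      congr 1
      push_cast
      ring_nf
    have hz' : z ^ m' = z ^ m := by
      have hze : z ^ ((e : ℤ) * t) = 1 := by
        rw [zpow_mul, zpow_natCast, hz, one_zpow]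
      rw [hm', zpow_add, hze, mul_one]
    have hΦ' : Φ ^ m' = Φ ^ m * (ρu gE) ^ t := by
      rw [hm', zpow_add]
      congr 1
      rw [zpow_mul, zpow_natCast, hΦe]
    simp only [hF]
    rw [hz', hΦ', hn', map_mul, map_zpow ρu gE (-t)]
    group
  have hmul : ∀ (z : kˣ) (m1 m2 : ℤ) (n1 n2 : N),
      F z m1 n1 * F z m2 n2 = F z (m1 + m2) (conjN m2 n1 * n2) := by
    intro z m1 m2 n1 n2
    simp only [hF, map_mul, zpow_add]
    have step1 : ρu n1 * (scal (z ^ m2) * (Φ ^ m2 * ρu n2))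
        = scal (z ^ m2) * (Φ ^ m2 * (ρu (conjN m2 n1) * ρu n2)) := by
      rw [← mul_assoc (ρu n1), ← hcentral (z ^ m2) (ρu n1), mul_assoc, ← mul_assoc (ρu n1),
        hΦconj m2 n1, mul_assoc]
    calc scal (z ^ m1) * Φ ^ m1 * ρu n1 * (scal (z ^ m2) * Φ ^ m2 * ρu n2)
        = scal (z ^ m1) * (Φ ^ m1 * (ρu n1 * (scal (z ^ m2) * (Φ ^ m2 * ρu n2)))) := by
          group
      _ = scal (z ^ m1) * (Φ ^ m1 * (scal (z ^ m2) * (Φ ^ m2 * (ρu (conjN m2 n1) * ρu n2)))) := by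
          rw [step1]
      _ = scal (z ^ m1) * (scal (z ^ m2) * (Φ ^ m1 * (Φ ^ m2 * (ρu (conjN m2 n1) * ρu n2)))) := by
          rw [← mul_assoc (Φ ^ m1), ← hcentral (z ^ m2) (Φ ^ m1), mul_assoc]
      _ = scal (z ^ m1) * scal (z ^ m2) * (Φ ^ m1 * Φ ^ m2) * (ρu (conjN m2 n1) * ρu n2) := by
          group
  -- the monoid homs
  have hπu : ∀ (z : kˣ), z ^ e = 1 → ∃ P : H →* (Module.End k V)ˣ,
      ∀ h : H, P h = F z (mh h) (nh h) := by
    intro z hz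
    refine ⟨{ toFun := fun h => F z (mh h) (nh h), map_one' := ?_, map_mul' := ?_ }, fun h => rfl⟩
    · show F z (mh 1) (nh 1) = 1
      have h1 : F z (mh 1) (nh 1) = F z 0 1 := by
        refine hwd z hz _ 0 _ 1 ?_
        rw [hdecomp 1]
        simp
      rw [h1]
      simp [hF]
    · intro a b
      show F z (mh (a * b)) (nh (a * b)) = F z (mh a) (nh a) * F z (mh b) (nh b)
      have h1 : F z (mh (a * b)) (nh (a * b)) = F z (mh a + mh b) (conjN (mh b) (nh a) * nh b) := by
        refine hwd z hz _ _ _ _ ?_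
        rw [hdecomp (a * b)]
        calc a * b = g ^ mh a * ↑(nh a) * (g ^ mh b * ↑(nh b)) := by
              rw [hdecomp, hdecomp]
          _ = g ^ (mh a + mh b) * (g ^ (-(mh b)) * ↑(nh a) * g ^ (mh b) * ↑(nh b)) := by
              group
          _ = g ^ (mh a + mh b) * ↑(conjN (mh b) (nh a) * nh b) := by
              push_cast [hconjN]
              group
      rw [h1, hmul]
  -- roots of unity
  have hne : NeZero (e : k) := ⟨he⟩
  obtain ⟨ζ, hζ⟩ := HasEnoughRootsOfUnity.exists_primitiveRoot k e
  have hζ0 : ζ ≠ 0 := by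
    intro h0
    have := hζ.pow_eq_one
    rw [h0, zero_pow epos.ne'] at this
    exact zero_ne_one this
  set ζu : kˣ := Units.mk0 ζ hζ0 with hζu
  have hζe : ζu ^ e = 1 := by
    rw [Units.ext_iff]
    push_cast [hζu]
    exact hζ.pow_eq_one
  have hζue : ∀ i : Fin e, (ζu ^ (i : ℕ)) ^ e = 1 := by
    intro i
    rw [← pow_mul, mul_comm, pow_mul, hζe, one_pow]
  choose P hP using fun i : Fin e => hπu (ζu ^ (i : ℕ)) (hζue i)
  set π : Fin e → Representation k H V :=
    fun i => (Units.coeHom (Module.End k V)).comp (P i) with hπ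
  have hres : ∀ (i : Fin e) (n : N), π i (n : H) = ρ n := by
    intro i n
    have h2 : P i (n : H) = ρu n := by
      rw [hP i]
      have h1 : F (ζu ^ (i : ℕ)) (mh (n : H)) (nh (n : H)) = F (ζu ^ (i : ℕ)) 0 n := by
        refine hwd _ (hζue i) _ 0 _ n ?_
        rw [hdecomp]
        simp
      rw [h1]
      simp [hF]
    simp only [hπ, MonoidHom.comp_apply, Units.coeHom_apply, h2]
    rfl
  have hgval : ∀ i : Fin e, π i g = ((scal (ζu ^ (i : ℕ)) * Φ : (Module.End k V)ˣ) :
      Module.End k V) := by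
    intro i
    have h2 : P i g = scal (ζu ^ (i : ℕ)) * Φ := by
      rw [hP i]
      have h1 : F (ζu ^ (i : ℕ)) (mh g) (nh g) = F (ζu ^ (i : ℕ)) 1 1 := by
        refine hwd _ (hζue i) _ 1 _ 1 ?_
        rw [hdecomp]
        simp
      rw [h1]
      simp [hF]
    simp only [hπ, MonoidHom.comp_apply, Units.coeHom_apply, h2]
  refine ⟨π, hres, ?_⟩
  rintro i j hij ⟨ψ, hψ⟩
  have hψN : ∀ n : N, (ψ : V →ₗ[k] V) ∘ₗ ρ n = ρ n ∘ₗ (ψ : V →ₗ[k] V) := by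
    intro n
    have := hψ (n : H)
    rwa [hres i, hres j] at this
  obtain ⟨c2, hc2⟩ := schur_scalar ρ hsimple (ψ : V →ₗ[k] V) hψN
  have hc20 : c2 ≠ 0 := by
    intro h0
    obtain ⟨v, hv⟩ := exists_ne (0 : V)
    apply hv
    have h1 : ψ v = 0 := by rw [show (ψ v) = (ψ : V →ₗ[k] V) v from rfl, hc2, h0, zero_smul]
    simpa using congrArg ψ.symm h1
  obtain ⟨v, hv⟩ := exists_ne (0 : V)
  have hΦv : (Φ : Module.End k V) v ≠ 0 := by
    intro h0
    apply hv
    have h3 : (↑Φ⁻¹ : Module.End k V) ((Φ : Module.End k V) v) = v := by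
      rw [← Module.End.mul_apply, ← Units.val_mul, inv_mul_cancel, Units.val_one,
        Module.End.one_apply]
    rw [← h3, h0, map_zero]
  have hg2 := hψ g
  rw [hgval i, hgval j] at hg2
  have hg3 := LinearMap.congr_fun hg2 v
  have hval : ∀ (l : Fin e) (w : V), ((scal (ζu ^ (l : ℕ)) * Φ : (Module.End k V)ˣ) :
      Module.End k V) w = (ζ ^ (l : ℕ)) • (Φ : Module.End k V) w := by
    intro l w
    rw [Units.val_mul, Module.End.mul_apply, hscal_coe, Module.algebraMap_end_apply]
    push_cast [hζu]
    rfl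
  rw [LinearMap.comp_apply, LinearMap.comp_apply, hval i, hval j, map_smul,
    show ((ψ : V →ₗ[k] V) ((Φ : Module.End k V) v)) = c2 • (Φ : Module.End k V) v from hc2 _,
    show ((ψ : V →ₗ[k] V) v) = c2 • v from hc2 v, map_smul] at hg3
  have hg4 : (ζ ^ (i : ℕ) * c2) • (Φ : Module.End k V) v
      = (ζ ^ (j : ℕ) * c2) • (Φ : Module.End k V) v := by
    rw [mul_smul, mul_smul]
    exact hg3
  have hg5 : ζ ^ (i : ℕ) * c2 = ζ ^ (j : ℕ) * c2 := by
    by_contra hne2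
    have h1 := sub_eq_zero.mpr hg4
    rw [← sub_smul] at h1
    rcases smul_eq_zero.mp h1 with h | h
    · exact hne2 (sub_eq_zero.mp h)
    · exact hΦv h
  have : (i : ℕ) = (j : ℕ) := hζ.pow_inj i.isLt j.isLt (mul_right_cancel₀ hc20 hg5)
  exact hij (Fin.ext this)
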